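/- Let n be a positive integer and ε ≠ 0. Suppose φ : ℝ → ℝ is three times differentiable and satisfies the ODE ε φ'''(ω) + (φ(ω)ⁿ − ω/3) φ'(ω) − (2/(3n)) φ(ω) = 0 for all ω ∈ ℝ. Then u(t,x) = t^(−2/(3n)) φ( x t^(−1/3) ) satisfies u_t + uⁿ u_x + ε u_{xxx} = 0 for all t > 0 and x ∈ ℝ. -/

import Mathlib

/-- Partial derivative in `t` of `u = u(t,x)`. -/
noncomputable def pt (u : ℝ → ℝ → ℝ) (t x : ℝ) : ℝ := deriv (fun s => u s x) t
/-- Partial derivative in `x` of `u = u(t,x)`. -/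
noncomputable def px (u : ℝ → ℝ → ℝ) (t x : ℝ) : ℝ := deriv (fun y => u t y) x
/-- Third partial derivative in `x` of `u = u(t,x)`. -/
noncomputable def pxxx (u : ℝ → ℝ → ℝ) (t x : ℝ) : ℝ := iteratedDeriv 3 (fun y => u t y) x
/-- Case 5 of Table 4: a solution of the reduced ODE
`ε φ''' + (φⁿ − ω/3) φ' − (2/(3n)) φ = 0` gives, via the ansatz
`u = t^{−2/(3n)} φ(x t^{−1/3})`, a solution of `u_t + uⁿ u_x + ε u_{xxx} = 0`. -/
lemma deriv_scale (g : ℝ → ℝ) (hg : Differentiable ℝ g) (a c : ℝ) :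
    deriv (fun y => a * g (y * c)) = fun y => (a * c) * deriv g (y * c) := by
  funext x
  have hin : HasDerivAt (fun y : ℝ => y * c) (1 * c) x := (hasDerivAt_id x).mul_const c
  have h : HasDerivAt (fun y => a * g (y * c)) (a * (deriv g (x * c) * (1 * c))) x :=
    ((hg (x * c)).hasDerivAt.comp x hin).const_mul a
  rw [h.deriv]; ring

theorem stmt_11 (n : ℕ) (hn : 0 < n) (ε : ℝ) (hε : ε ≠ 0)
    (φ : ℝ → ℝ) (hφ1 : Differentiable ℝ φ) (hφ2 : Differentiable ℝ (deriv φ))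
    (hφ3 : Differentiable ℝ (deriv (deriv φ)))
    (hode : ∀ ω : ℝ, ε * deriv (deriv (deriv φ)) ω
      + (φ ω ^ n - ω / 3) * deriv φ ω - 2 / (3 * (n:ℝ)) * φ ω = 0)
    (u : ℝ → ℝ → ℝ)
    (hu : ∀ t x, u t x = t ^ (-2 / (3 * (n:ℝ))) * φ (x * t ^ (-(1:ℝ) / 3))) :
    ∀ t, 0 < t → ∀ x : ℝ,
      pt u t x + (u t x) ^ n * px u t x + ε * pxxx u t x = 0 := by
  intro t ht x
  have htne : t ≠ 0 := ne_of_gt ht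
  have hnne : (n:ℝ) ≠ 0 := Nat.cast_ne_zero.mpr hn.ne'
  set α : ℝ := -2 / (3 * (n:ℝ)) with hα
  set c : ℝ := t ^ (-(1:ℝ) / 3) with hc
  -- x-derivatives
  have hfun : (fun y => u t y) = fun y => t ^ α * φ (y * c) := funext fun y => hu t y
  have h1 : deriv (fun y => u t y) = fun y => (t ^ α * c) * deriv φ (y * c) := by
    rw [hfun, deriv_scale φ hφ1]
  have h2 : deriv (deriv (fun y => u t y)) = fun y => (t ^ α * c * c) * deriv (deriv φ) (y * c) := by
    rw [h1, deriv_scale (deriv φ) hφ2]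
  have h3 : deriv (deriv (deriv (fun y => u t y)))
      = fun y => (t ^ α * c * c * c) * deriv (deriv (deriv φ)) (y * c) := by
    rw [h2, deriv_scale (deriv (deriv φ)) hφ3]
  have hpx : px u t x = (t ^ α * c) * deriv φ (x * c) := by
    unfold px; rw [h1]
  have hpxxx : pxxx u t x = (t ^ α * c * c * c) * deriv (deriv (deriv φ)) (x * c) := by
    unfold pxxx
    rw [show (3:ℕ) = 2 + 1 from rfl, iteratedDeriv_succ,
      show (2:ℕ) = 1 + 1 from rfl, iteratedDeriv_succ, iteratedDeriv_one, h3]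
  -- t-derivative
  have hpow : HasDerivAt (fun s : ℝ => s ^ α) (α * t ^ (α - 1)) t :=
    Real.hasDerivAt_rpow_const (Or.inl htne)
  have hinner : HasDerivAt (fun s : ℝ => x * s ^ (-(1:ℝ) / 3))
      (x * ((-(1:ℝ) / 3) * t ^ ((-(1:ℝ) / 3) - 1))) t :=
    (Real.hasDerivAt_rpow_const (Or.inl htne)).const_mul x
  have hφc : HasDerivAt (fun s : ℝ => φ (x * s ^ (-(1:ℝ) / 3)))
      (deriv φ (x * c) * (x * ((-(1:ℝ) / 3) * t ^ ((-(1:ℝ) / 3) - 1)))) t :=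
    (hφ1 (x * c)).hasDerivAt.comp t hinner
  have hmul := hpow.mul hφc
  have hpt : pt u t x = α * t ^ (α - 1) * φ (x * c)
      + t ^ α * (deriv φ (x * c) * (x * ((-(1:ℝ) / 3) * t ^ ((-(1:ℝ) / 3) - 1)))) := by
    unfold pt
    have hf : (fun s => u s x) = fun s => s ^ α * φ (x * s ^ (-(1:ℝ) / 3)) :=
      funext fun s => hu s x
    rw [hf]; exact hmul.deriv
  -- rpow algebra
  have e1 : t ^ (α - 1) = t ^ α * c * c * c := by
    rw [show α - 1 = α + (-(1:ℝ)/3) + (-(1:ℝ)/3) + (-(1:ℝ)/3) by ring,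
      Real.rpow_add ht, Real.rpow_add ht, Real.rpow_add ht, hc]
  have e2 : t ^ ((-(1:ℝ) / 3) - 1) = c * c * c * c := by
    rw [show (-(1:ℝ)/3) - 1 = (-(1:ℝ)/3) + (-(1:ℝ)/3) + (-(1:ℝ)/3) + (-(1:ℝ)/3) by ring,
      Real.rpow_add ht, Real.rpow_add ht, Real.rpow_add ht, hc]
  have e3 : (t ^ α) ^ n = c * c := by
    rw [← Real.rpow_natCast (t ^ α) n, ← Real.rpow_mul ht.le,
      show α * (n:ℝ) = (-(1:ℝ)/3) + (-(1:ℝ)/3) by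
        rw [hα, div_mul_eq_mul_div, div_eq_iff (mul_ne_zero three_ne_zero hnne)]; ring,
      Real.rpow_add ht, hc]
  -- assemble
  rw [hpt, hpx, hpxxx, hu t x, e1, e2, mul_pow, e3]
  have hO := hode (x * c)
  linear_combination (t ^ α * c * c * c) * hO
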